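/- Suppose liminf_{k→∞} log(n₁⋯n_k)/(−log(c₁⋯c_k)) < limsup_{k→∞} log(n₁⋯n_k)/(−log(c₁⋯c_k)). Then no Moran set E ∈ M(J,{n_k},{c_k}) (with inf_k c_k > 0) is Ahlfors–David s-regular for any s ∈ (0,∞). -/

import Mathlib

open scoped ENNReal

noncomputable section

open Filter MeasureTheory

/-- A compact set `A` is *homogeneous* with respect to the Borel probability measure `μ`
supported on `A` and constants `lam ≥ 1`, `kappa ∈ (0,1)`, `1 < del ≤ Del`. -/
structure IsHomog {X : Type*} [MetricSpace X] [MeasurableSpace X]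
    (A : Set X) (μ : Measure X) (lam kappa del Del : ℝ) : Prop where
  compact : IsCompact A
  diam_pos : 0 < Metric.diam A
  prob : IsProbabilityMeasure μ
  supp_null : μ Aᶜ = 0
  supp_pos : ∀ x ∈ A, ∀ r : ℝ, 0 < r → 0 < μ (Metric.closedBall x r)
  one_le_lam : 1 ≤ lam
  ratio_le : ∀ x₁ ∈ A, ∀ x₂ ∈ A, ∀ r : ℝ, 0 < r → r ≤ Metric.diam A →
    (μ (Metric.closedBall x₁ r)).toReal ≤ lam * (μ (Metric.closedBall x₂ r)).toReal
  kappa_pos : 0 < kappa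
  kappa_lt_one : kappa < 1
  one_lt_del : 1 < del
  del_le_Del : del ≤ Del
  scale_lower : ∀ x ∈ A, ∀ r : ℝ, 0 < r → r ≤ Metric.diam A →
    del * (μ (Metric.closedBall x (kappa * r))).toReal ≤ (μ (Metric.closedBall x r)).toReal
  scale_upper : ∀ x ∈ A, ∀ r : ℝ, 0 < r → r ≤ Metric.diam A →
    (μ (Metric.closedBall x r)).toReal ≤ Del * (μ (Metric.closedBall x (kappa * r))).toReal

/-- `alphaPt μ x r = log μ(B(x,r)) / log r`. -/
def alphaPt {X : Type*} [MetricSpace X] [MeasurableSpace X]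
    (μ : Measure X) (x : X) (r : ℝ) : ℝ :=
  Real.log (μ (Metric.closedBall x r)).toReal / Real.log r

/-- `g ∼ h` : `|h r - g r| = O(1/|log r|)` as `r → 0⁺`. -/
def EquivNearZero (g h : ℝ → ℝ) : Prop :=
  ∃ C : ℝ, 0 < C ∧ ∃ δ : ℝ, 0 < δ ∧ ∀ r : ℝ, 0 < r → r < δ → |h r - g r| ≤ C / |Real.log r|

/-- `g` is a representative of the equivalence class `[α_A(x,·)]` of the homogeneous set `A`. -/
def IsAlphaRep {X : Type*} [MetricSpace X] [MeasurableSpace X]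
    (A : Set X) (μ : Measure X) (g : ℝ → ℝ) : Prop :=
  ∃ x ∈ A, EquivNearZero g (fun r => alphaPt μ x r)

/-- `χ(A,B)` computed from representatives `g` of `[α_A]` and `h` of `[α_B]`. -/
def chiFun (g h : ℝ → ℝ) : ℝ :=
  Filter.limsup (fun r => |Real.log (g r / h r)|) (nhdsWithin (0 : ℝ) (Set.Ioi 0))

/-- `N(A,r)`: the smallest number of closed balls of radius `r` needed to cover `A`. -/
def coverNum {X : Type*} [MetricSpace X] (A : Set X) (r : ℝ) : ℕ :=
  sInf {m : ℕ | ∃ s : Finset X, s.card = m ∧ A ⊆ ⋃ x ∈ s, Metric.closedBall x r}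

/-- Lower box-counting dimension. -/
def lowerBoxDim {X : Type*} [MetricSpace X] (A : Set X) : ℝ :=
  Filter.liminf (fun r : ℝ => Real.log (coverNum A r : ℝ) / (-Real.log r))
    (nhdsWithin (0 : ℝ) (Set.Ioi 0))

/-- Upper box-counting dimension. -/
def upperBoxDim {X : Type*} [MetricSpace X] (A : Set X) : ℝ :=
  Filter.limsup (fun r : ℝ => Real.log (coverNum A r : ℝ) / (-Real.log r))
    (nhdsWithin (0 : ℝ) (Set.Ioi 0))

/-- Radius-based packing premeasure. -/
def packPre {X : Type*} [MetricSpace X] (A : Set X) (s : ℝ) : ℝ≥0∞ :=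
  ⨅ (δ : ℝ) (_ : 0 < δ),
    ⨆ (m : ℕ) (x : Fin m → X) (ρ : Fin m → ℝ) (_ : ∀ i, x i ∈ A)
      (_ : ∀ i, 0 < ρ i ∧ ρ i ≤ δ)
      (_ : ∀ i j, i ≠ j →
        Disjoint (Metric.closedBall (x i) (ρ i)) (Metric.closedBall (x j) (ρ j))),
      ∑ i, ENNReal.ofReal (ρ i ^ s)

/-- Radius-based packing measure. -/
def packMeasure {X : Type*} [MetricSpace X] (A : Set X) (s : ℝ) : ℝ≥0∞ :=
  ⨅ (F : ℕ → Set X) (_ : A ⊆ ⋃ m, F m), ∑' m, packPre (F m) s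

/-- Radius-based packing dimension. -/
def packDim {X : Type*} [MetricSpace X] (A : Set X) : ℝ :=
  sInf {s : ℝ | 0 ≤ s ∧ packMeasure A s = 0}

/-- Distance between two sets, valued in `ℝ≥0∞`. -/
def setDistE {X : Type*} [MetricSpace X] (E F : Set X) : ℝ≥0∞ :=
  ⨅ (a : X) (_ : a ∈ E) (b : X) (_ : b ∈ F), edist a b

/-- Uniformly disconnected set. -/
def UnifDisconn {X : Type*} [MetricSpace X] (A : Set X) : Prop :=
  ∃ C : ℝ, 1 < C ∧ ∃ rstar : ℝ, 0 < rstar ∧ ∀ x ∈ A, ∀ r : ℝ, 0 < r → r < rstar →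
    ∃ E : Set X, E ⊆ A ∧ A ∩ Metric.closedBall x r ⊆ E ∧
      E ⊆ Metric.closedBall x (C * r) ∧ ENNReal.ofReal r < setDistE E (A \ E)

/-- `A` can be bilipschitz embedded into `B`. -/
def BilipEmbed {X Y : Type*} [MetricSpace X] [MetricSpace Y] (A : Set X) (B : Set Y) : Prop :=
  ∃ (f : X → Y) (L : ℝ), 1 ≤ L ∧ Set.MapsTo f A B ∧ Set.InjOn f A ∧
    ∀ x₁ ∈ A, ∀ x₂ ∈ A,
      dist x₁ x₂ / L ≤ dist (f x₁) (f x₂) ∧ dist (f x₁) (f x₂) ≤ L * dist x₁ x₂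

/-- `A` and `B` are bilipschitz equivalent. -/
def BilipEquivSets {X Y : Type*} [MetricSpace X] [MetricSpace Y] (A : Set X) (B : Set Y) :
    Prop :=
  ∃ (f : X → Y) (L : ℝ), 1 ≤ L ∧ Set.BijOn f A B ∧
    ∀ x₁ ∈ A, ∀ x₂ ∈ A,
      dist x₁ x₂ / L ≤ dist (f x₁) (f x₂) ∧ dist (f x₁) (f x₂) ≤ L * dist x₁ x₂

/-- `A` and `B` are quasi-Lipschitz equivalent. -/
def QuasiLipEquiv {X Y : Type*} [MetricSpace X] [MetricSpace Y] (A : Set X) (B : Set Y) : Prop :=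
  ∃ f : X → Y, Set.BijOn f A B ∧
    ∀ ε : ℝ, 0 < ε → ∃ δ : ℝ, 0 < δ ∧ ∀ x₁ ∈ A, ∀ x₂ ∈ A,
      0 < dist x₁ x₂ → dist x₁ x₂ < δ →
      |Real.log (dist (f x₁) (f x₂)) / Real.log (dist x₁ x₂) - 1| < ε

/-- Ahlfors–David `s`-regular set. -/
def IsADRegular {X : Type*} [MetricSpace X] [MeasurableSpace X] (A : Set X) (s : ℝ) : Prop :=
  IsCompact A ∧ 0 < Metric.diam A ∧
    ∃ (μ : Measure X) (c : ℝ), 1 ≤ c ∧ μ Aᶜ = 0 ∧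
      ∀ x ∈ A, ∀ r : ℝ, 0 < r → r ≤ Metric.diam A →
        ENNReal.ofReal (c⁻¹ * r ^ s) ≤ μ (Metric.closedBall x r) ∧
          μ (Metric.closedBall x r) ≤ ENNReal.ofReal (c * r ^ s)

/-- `n₁ ⋯ n_k` (with `0`-based indexing of the sequence `n`). -/
def prodN (n : ℕ → ℕ) (k : ℕ) : ℕ := ∏ i ∈ Finset.range k, n i

/-- `c₁ ⋯ c_k` (with `0`-based indexing of the sequence `c`). -/
def prodC (c : ℕ → ℝ) (k : ℕ) : ℝ := ∏ i ∈ Finset.range k, c i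

/-- Admissible word for the branching sequence `n`. -/
def AdmWord (n : ℕ → ℕ) (w : List ℕ) : Prop := ∀ i : Fin w.length, w.get i < n i.val

/-- A Moran structure on `J ⊆ ℝ^d` with branching numbers `n` and ratios `c`:
`Jw w` is the basic set indexed by the word `w`. -/
structure IsMoranSystem {d : ℕ} (J : Set (EuclideanSpace ℝ (Fin d))) (n : ℕ → ℕ)
    (c : ℕ → ℝ) (Jw : List ℕ → Set (EuclideanSpace ℝ (Fin d))) : Prop where
  compact : IsCompact J
  int_nonempty : (interior J).Nonempty
  two_le_n : ∀ k, 2 ≤ n k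
  c_pos : ∀ k, 0 < c k
  c_lt_one : ∀ k, c k < 1
  c_inf_pos : ∃ c₀ : ℝ, 0 < c₀ ∧ ∀ k, c₀ ≤ c k
  root : Jw [] = J
  subset : ∀ w : List ℕ, AdmWord n w → ∀ i : ℕ, i < n w.length → Jw (w ++ [i]) ⊆ Jw w
  similar : ∀ w : List ℕ, AdmWord n w → ∀ i : ℕ, i < n w.length →
    ∃ S : EuclideanSpace ℝ (Fin d) → EuclideanSpace ℝ (Fin d),
      (∀ x y, dist (S x) (S y) = c w.length * dist x y) ∧ Jw (w ++ [i]) = S '' Jw w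
  disj_int : ∀ w : List ℕ, AdmWord n w → ∀ i : ℕ, i < n w.length → ∀ j : ℕ, j < n w.length →
    i ≠ j → Disjoint (interior (Jw (w ++ [i]))) (interior (Jw (w ++ [j])))

/-- The Moran set determined by the family `Jw`. -/
def moranSet {d : ℕ} (n : ℕ → ℕ) (Jw : List ℕ → Set (EuclideanSpace ℝ (Fin d))) :
    Set (EuclideanSpace ℝ (Fin d)) :=
  ⋂ k : ℕ, ⋃ (w : List ℕ) (_ : w.length = k ∧ AdmWord n w), Jw w

/-- The index `k` such that `(c₁⋯c_k)·D < r ≤ (c₁⋯c_{k-1})·D`. -/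
def levelOf (c : ℕ → ℝ) (D r : ℝ) : ℕ := sInf {k : ℕ | prodC c k * D < r}

/-- `Φ(r) = n₁⋯n_k` whenever `(c₁⋯c_k)·D < r ≤ (c₁⋯c_{k-1})·D`, where `D = |J|`. -/
def Phi (n : ℕ → ℕ) (c : ℕ → ℝ) (D r : ℝ) : ℕ := prodN n (levelOf c D r)


section MoranAux
open Metric Set

section Sim
variable {E : Type*} [NormedAddCommGroup E] [InnerProductSpace ℝ E]

theorem sim_linear (f : E → E) (h0 : f 0 = 0) (hd : ∀ x y, dist (f x) (f y) = dist x y) :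
    IsLinearMap ℝ f := by
  have hn : ∀ z, ‖f z‖ = ‖z‖ := by
    intro z; simpa [h0, dist_eq_norm] using hd z 0
  have hi : ∀ x y, inner ℝ (f x) (f y) = (inner ℝ x y : ℝ) := by
    intro x y
    have h1 := hd x y
    rw [dist_eq_norm, dist_eq_norm] at h1
    have e1 : ‖f x - f y‖^2 = ‖x - y‖^2 := by rw [h1]
    rw [norm_sub_sq_real, norm_sub_sq_real, hn, hn] at e1
    linarith
  constructor
  · intro x y
    have h2 : ‖f (x + y) - (f x + f y)‖^2 = 0 := by
      have expand : ∀ a b c : E, ‖a - (b + c)‖^2 =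
          ‖a‖^2 + ‖b‖^2 + ‖c‖^2 - 2*inner ℝ a b - 2*inner ℝ a c + 2*(inner ℝ b c : ℝ) := by
        intro a b c
        rw [← real_inner_self_eq_norm_sq, ← real_inner_self_eq_norm_sq,
          ← real_inner_self_eq_norm_sq, ← real_inner_self_eq_norm_sq]
        simp only [inner_sub_left, inner_sub_right, inner_add_left, inner_add_right,
          real_inner_comm a b, real_inner_comm a c, real_inner_comm b c]
        ring
      rw [expand, hn, hn, hn, hi, hi, hi, ← expand]
      simp
    have h3 : f (x + y) - (f x + f y) = 0 :=
      norm_eq_zero.mp (pow_eq_zero_iff (n := 2) two_ne_zero |>.mp h2)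
    exact sub_eq_zero.mp h3
  · intro a x
    have h2 : ‖f (a • x) - a • f x‖^2 = 0 := by
      have expand : ∀ (b : E) (t : ℝ) (u : E), ‖b - t • u‖^2 =
          ‖b‖^2 - 2*t*inner ℝ b u + t^2 * (‖u‖^2) := by
        intro b t u
        rw [← real_inner_self_eq_norm_sq, ← real_inner_self_eq_norm_sq,
          ← real_inner_self_eq_norm_sq]
        simp only [inner_sub_left, inner_sub_right, inner_smul_left, inner_smul_right,
          RCLike.conj_to_real, real_inner_comm b u]
        ring
      rw [expand, hn, hn, hi, ← expand]
      simp
    have h3 : f (a • x) - a • f x = 0 :=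
      norm_eq_zero.mp (pow_eq_zero_iff (n := 2) two_ne_zero |>.mp h2)
    exact sub_eq_zero.mp h3

variable [FiniteDimensional ℝ E]

theorem sim_surj {c : ℝ} (hc : 0 < c) (S : E → E)
    (hS : ∀ x y, dist (S x) (S y) = c * dist x y) : Function.Surjective S := by
  set f : E → E := fun x => c⁻¹ • (S x - S 0) with hf
  have h0 : f 0 = 0 := by simp [hf]
  have hd : ∀ x y, dist (f x) (f y) = dist x y := by
    intro x y
    have : f x - f y = c⁻¹ • (S x - S y) := by
      simp [hf, smul_sub]
    rw [dist_eq_norm, this, norm_smul, Real.norm_eq_abs, abs_of_pos (inv_pos.mpr hc),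
      ← dist_eq_norm, hS, inv_mul_cancel_left₀ hc.ne']
  have hlin := sim_linear f h0 hd
  set F : E →ₗ[ℝ] E := IsLinearMap.mk' f hlin with hF
  have hinj : Function.Injective F := by
    intro a b hab
    have hab' : f a = f b := hab
    have h1 : dist a b = 0 := by rw [← hd a b, hab', dist_self]
    exact dist_eq_zero.mp h1
  have hsurj : Function.Surjective F := LinearMap.injective_iff_surjective.mp hinj
  intro p
  obtain ⟨x, hx⟩ := hsurj (c⁻¹ • (p - S 0))
  refine ⟨x, ?_⟩
  have hfx : f x = c⁻¹ • (p - S 0) := hx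
  have : S x - S 0 = p - S 0 := by
    have := congrArg (fun v => c • v) hfx
    simpa [hf, smul_smul, mul_inv_cancel₀ hc.ne'] using this
  exact sub_left_inj.mp this

end Sim

section Sim2
variable {E : Type*} [NormedAddCommGroup E] [InnerProductSpace ℝ E] [FiniteDimensional ℝ E]

theorem sim_ball_subset {c : ℝ} (hc : 0 < c) (S : E → E)
    (hS : ∀ x y, dist (S x) (S y) = c * dist x y) (y : E) (r : ℝ) :
    ball (S y) (c * r) ⊆ S '' ball y r := by
  intro p hp
  obtain ⟨x, rfl⟩ := sim_surj hc S hS p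
  refine ⟨x, ?_, rfl⟩
  have := mem_ball.mp hp
  rw [hS] at this
  exact mem_ball.mpr (by nlinarith)

set_option linter.unusedSectionVars false in
theorem sim_lipschitz {c : ℝ} (hc : 0 < c) (S : E → E)
    (hS : ∀ x y, dist (S x) (S y) = c * dist x y) :
    LipschitzWith (Real.toNNReal c) S := by
  refine LipschitzWith.of_dist_le_mul fun x y => ?_
  rw [hS, Real.coe_toNNReal c hc.le]

theorem sim_diam {c : ℝ} (hc : 0 < c) (S : E → E)
    (hS : ∀ x y, dist (S x) (S y) = c * dist x y) (K : Set E)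
    (hK : Bornology.IsBounded K) : diam (S '' K) = c * diam K := by
  have hK' : Bornology.IsBounded (S '' K) := (sim_lipschitz hc S hS).isBounded_image hK
  refine le_antisymm ?_ ?_
  · refine diam_le_of_forall_dist_le (by positivity) ?_
    rintro p ⟨x, hx, rfl⟩ q ⟨y, hy, rfl⟩
    rw [hS]
    exact mul_le_mul_of_nonneg_left (dist_le_diam_of_mem hK hx hy) hc.le
  · rw [← le_div_iff₀' hc]
    refine diam_le_of_forall_dist_le (by positivity) fun x hx y hy => ?_
    rw [le_div_iff₀' hc, ← hS]
    exact dist_le_diam_of_mem hK' ⟨x, hx, rfl⟩ ⟨y, hy, rfl⟩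

end Sim2

section Count
variable {d : ℕ}

theorem ball_count {ι : Type*} (hd : 0 < d) (F : Finset ι)
    (y : ι → EuclideanSpace ℝ (Fin d)) {ρ R : ℝ} (hρ : 0 < ρ) (hR : 0 ≤ R)
    (p : EuclideanSpace ℝ (Fin d))
    (h1 : ∀ i ∈ F, ball (y i) ρ ⊆ ball p R)
    (h2 : (↑F : Set ι).Pairwise fun i j => Disjoint (ball (y i) ρ) (ball (y j) ρ)) :
    (F.card : ℝ) * ρ ^ d ≤ R ^ d := by
  classical
  set μ : Measure (EuclideanSpace ℝ (Fin d)) := volume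
  have hmeas : ∀ i ∈ F, MeasurableSet (ball (y i) ρ) := fun i _ => measurableSet_ball
  have hsum : ∑ i ∈ F, μ (ball (y i) ρ) = μ (⋃ i ∈ F, ball (y i) ρ) :=
    (measure_biUnion_finset h2 hmeas).symm
  have hle : μ (⋃ i ∈ F, ball (y i) ρ) ≤ μ (ball p R) :=
    measure_mono (Set.iUnion₂_subset h1)
  have hball : ∀ (x : EuclideanSpace ℝ (Fin d)) (r : ℝ), 0 < r →
      μ (ball x r) = ENNReal.ofReal (r ^ d) * μ (ball 0 1) := by
    intro x r hr
    rw [Measure.addHaar_ball_of_pos μ x hr, finrank_euclideanSpace_fin]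
  by_cases hRpos : 0 < R
  · have key : (F.card : ℝ≥0∞) * (ENNReal.ofReal (ρ ^ d) * μ (ball 0 1)) ≤
        ENNReal.ofReal (R ^ d) * μ (ball 0 1) := by
      calc (F.card : ℝ≥0∞) * (ENNReal.ofReal (ρ ^ d) * μ (ball 0 1))
          = ∑ i ∈ F, μ (ball (y i) ρ) := by
            rw [Finset.sum_congr rfl fun i _ => hball (y i) ρ hρ, Finset.sum_const,
              nsmul_eq_mul]
        _ ≤ μ (ball p R) := hsum ▸ hle
        _ = ENNReal.ofReal (R ^ d) * μ (ball 0 1) := hball p R hRpos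
    have hB0 : μ (ball (0 : EuclideanSpace ℝ (Fin d)) 1) ≠ 0 :=
      (measure_ball_pos μ 0 one_pos).ne'
    have hBt : μ (ball (0 : EuclideanSpace ℝ (Fin d)) 1) ≠ ⊤ :=
      measure_ball_lt_top.ne
    rw [← mul_assoc] at key
    have key2 : (F.card : ℝ≥0∞) * ENNReal.ofReal (ρ ^ d) ≤ ENNReal.ofReal (R ^ d) :=
      (ENNReal.mul_le_mul_iff_left hB0 hBt).mp key
    have : ENNReal.ofReal ((F.card : ℝ) * ρ ^ d) ≤ ENNReal.ofReal (R ^ d) := by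
      rwa [ENNReal.ofReal_mul (by positivity), ENNReal.ofReal_natCast]
    exact (ENNReal.ofReal_le_ofReal_iff (by positivity)).mp this
  · have hR0 : R = 0 := le_antisymm (not_lt.mp hRpos) hR
    have : F = ∅ := by
      by_contra hne
      obtain ⟨i, hi⟩ := Finset.nonempty_of_ne_empty hne
      have := h1 i hi (mem_ball_self hρ)
      simp [hR0] at this
    subst hR0
    simp [this, zero_pow hd.ne']

theorem sum_measure_le_overlap {X ι : Type*} [MeasurableSpace X] (μ : Measure X)
    (F : Finset ι) (B : ι → Set X) (hmeas : ∀ i ∈ F, MeasurableSet (B i)) (M : ℝ≥0∞)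
    (hov : ∀ (p : X) (G : Finset ι), G ⊆ F → (∀ i ∈ G, p ∈ B i) → ((G.card : ℝ≥0∞) ≤ M)) :
    ∑ i ∈ F, μ (B i) ≤ M * μ Set.univ := by
  classical
  have h1 : ∀ i ∈ F, μ (B i) = ∫⁻ p, (B i).indicator (fun _ => (1 : ℝ≥0∞)) p ∂μ :=
    fun i hi => (lintegral_indicator_one (hmeas i hi)).symm
  calc ∑ i ∈ F, μ (B i) = ∑ i ∈ F, ∫⁻ p, (B i).indicator (fun _ => (1 : ℝ≥0∞)) p ∂μ :=
        Finset.sum_congr rfl h1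
    _ = ∫⁻ p, ∑ i ∈ F, (B i).indicator (fun _ => (1 : ℝ≥0∞)) p ∂μ :=
        (lintegral_finset_sum F fun i hi =>
          (measurable_const.indicator (hmeas i hi))).symm
    _ ≤ ∫⁻ _, M ∂μ := by
        refine lintegral_mono fun p => ?_
        have : ∑ i ∈ F, (B i).indicator (fun _ => (1 : ℝ≥0∞)) p =
            ((F.filter fun i => p ∈ B i).card : ℝ≥0∞) := by
          rw [Finset.card_filter]
          push_cast
          refine Finset.sum_congr rfl fun i _ => ?_
          by_cases h : p ∈ B i <;> simp [Set.indicator_apply, h]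
        rw [this]
        exact hov p _ (Finset.filter_subset _ _) fun i hi => (Finset.mem_filter.mp hi).2
    _ = M * μ Set.univ := lintegral_const M


section Words

/-- Finset of admissible words of length `k`. -/
def OmegaF (n : ℕ → ℕ) : ℕ → Finset (List ℕ)
  | 0 => {[]}
  | k+1 => (OmegaF n k).biUnion fun w => (Finset.range (n k)).image fun i => w ++ [i]

theorem admWord_append {n : ℕ → ℕ} {w : List ℕ} {i : ℕ} :
    AdmWord n (w ++ [i]) ↔ AdmWord n w ∧ i < n w.length := by
  constructor
  · intro h
    constructor
    · intro j
      have hj : (j : ℕ) < (w ++ [i]).length := by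
        simp only [List.length_append, List.length_singleton]
        omega
      have := h ⟨j, hj⟩
      simpa [List.get_eq_getElem, List.getElem_append_left j.isLt] using this
    · have hl : w.length < (w ++ [i]).length := by
        simp [List.length_append]
      have := h ⟨w.length, hl⟩
      simpa [List.get_eq_getElem, List.getElem_concat_length] using this
  · rintro ⟨h1, h2⟩ j
    rcases lt_or_ge (j : ℕ) w.length with hj | hj
    · have := h1 ⟨j, hj⟩
      simpa [List.get_eq_getElem, List.getElem_append_left hj] using this
    · have hj' : (j : ℕ) = w.length := by
        have := j.isLt
        simp only [List.length_append, List.length_singleton] at this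
        omega
      simp only [List.get_eq_getElem]
      rw [List.getElem_append_right (by omega)]
      simp [hj']
      omega

theorem mem_OmegaF {n : ℕ → ℕ} {k : ℕ} {w : List ℕ} :
    w ∈ OmegaF n k ↔ w.length = k ∧ AdmWord n w := by
  induction k generalizing w with
  | zero =>
    simp only [OmegaF, Finset.mem_singleton]
    constructor
    · rintro rfl
      exact ⟨rfl, fun i => i.elim0⟩
    · rintro ⟨h, -⟩
      exact List.eq_nil_of_length_eq_zero h
  | succ k ih =>
    simp only [OmegaF, Finset.mem_biUnion, Finset.mem_image, Finset.mem_range]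
    constructor
    · rintro ⟨u, hu, i, hi, rfl⟩
      obtain ⟨hlen, hadm⟩ := ih.mp hu
      refine ⟨by simp [hlen], admWord_append.mpr ⟨hadm, by rwa [hlen]⟩⟩
    · rintro ⟨hlen, hadm⟩
      have hw : w ≠ [] := by
        intro h; rw [h] at hlen; simp at hlen
      obtain ⟨u, i, hw'⟩ := (List.eq_nil_or_concat w).resolve_left hw
      rw [List.concat_eq_append] at hw'
      subst hw'
      obtain ⟨h1, h2⟩ := admWord_append.mp hadm
      have hul : u.length = k := by
        simp only [List.length_append, List.length_singleton] at hlen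
        omega
      exact ⟨u, ih.mpr ⟨hul, h1⟩, i, by rwa [hul] at h2, rfl⟩

theorem card_OmegaF {n : ℕ → ℕ} (k : ℕ) : (OmegaF n k).card = prodN n k := by
  induction k with
  | zero => simp [OmegaF, prodN]
  | succ k ih =>
    rw [prodN, Finset.prod_range_succ, ← prodN, ← ih]
    rw [OmegaF, Finset.card_biUnion]
    · rw [Finset.sum_congr rfl fun w _ => Finset.card_image_of_injective _
        (fun i j h => by simpa using List.append_cancel_left h)]
      simp [Finset.sum_const, Finset.card_range, Nat.mul_comm]
    · intro w hw v hv hwv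
      simp only [Finset.disjoint_left, Finset.mem_image, Finset.mem_range]
      rintro x ⟨i, hi, rfl⟩ ⟨j, hj, hx⟩
      exact hwv (by
        have := congrArg List.dropLast hx
        simpa [List.dropLast_concat] using this.symm)

theorem two_pow_le_prodN {n : ℕ → ℕ} (hn : ∀ k, 2 ≤ n k) (k : ℕ) :
    2 ^ k ≤ prodN n k := by
  induction k with
  | zero => simp [prodN]
  | succ k ih =>
    rw [prodN, Finset.prod_range_succ, ← prodN, pow_succ]
    exact Nat.mul_le_mul ih (hn k)

theorem one_le_prodN {n : ℕ → ℕ} (hn : ∀ k, 2 ≤ n k) (k : ℕ) : 1 ≤ prodN n k :=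
  le_trans (Nat.one_le_two_pow) (two_pow_le_prodN hn k)

theorem prodC_pos {c : ℕ → ℝ} (hc : ∀ k, 0 < c k) (k : ℕ) : 0 < prodC c k :=
  Finset.prod_pos fun i _ => hc i

theorem prodC_le_one {c : ℕ → ℝ} (hc : ∀ k, 0 < c k) (hc1 : ∀ k, c k < 1) (k : ℕ) :
    prodC c k ≤ 1 :=
  Finset.prod_le_one (fun i _ => (hc i).le) (fun i _ => (hc1 i).le)

theorem prodC_antitone {c : ℕ → ℝ} (hc : ∀ k, 0 < c k) (hc1 : ∀ k, c k < 1) :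
    Antitone (prodC c) := by
  refine antitone_nat_of_succ_le fun k => ?_
  rw [prodC, Finset.prod_range_succ, ← prodC]
  nlinarith [prodC_pos hc k, hc1 k, hc k]

end Words

end Count

section Moran

variable {d : ℕ} {J : Set (EuclideanSpace ℝ (Fin d))} {n : ℕ → ℕ} {c : ℕ → ℝ}
  {Jw : List ℕ → Set (EuclideanSpace ℝ (Fin d))}

theorem moran_basic (hM : IsMoranSystem J n c Jw) {z : EuclideanSpace ℝ (Fin d)} {ρ : ℝ}
    (hz : ball z ρ ⊆ J) (w : List ℕ) (hw : AdmWord n w) :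
    IsCompact (Jw w) ∧ Metric.diam (Jw w) = prodC c w.length * Metric.diam J ∧
      ∃ y, ball y (prodC c w.length * ρ) ⊆ Jw w := by
  induction w using List.reverseRecOn with
  | nil =>
    refine ⟨hM.root ▸ hM.compact, by simp [prodC, hM.root], z, by simpa [prodC, hM.root] using hz⟩
  | append_singleton u i ih =>
    obtain ⟨hu, hi⟩ := admWord_append.mp hw
    obtain ⟨hcomp, hdiam, y, hball⟩ := ih hu
    obtain ⟨S, hSdist, hSim⟩ := hM.similar u hu i hi
    have hcpos := hM.c_pos u.length
    have hlen : (u ++ [i]).length = u.length + 1 := by simp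
    have hprod : prodC c (u.length + 1) = prodC c u.length * c u.length := by
      rw [prodC, Finset.prod_range_succ, ← prodC]
    refine ⟨?_, ?_, ?_⟩
    · rw [hSim]
      exact hcomp.image (sim_lipschitz hcpos S hSdist).continuous
    · rw [hSim, sim_diam hcpos S hSdist _ hcomp.isBounded, hdiam, hlen, hprod]
      ring
    · refine ⟨S y, ?_⟩
      rw [hlen, hprod]
      have h1 : ball (S y) (c u.length * (prodC c u.length * ρ)) ⊆
          S '' ball y (prodC c u.length * ρ) :=
        sim_ball_subset hcpos S hSdist y _
      have h2 : S '' ball y (prodC c u.length * ρ) ⊆ Jw (u ++ [i]) := by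
        rw [hSim]; exact Set.image_mono hball
      have heq : prodC c u.length * c u.length * ρ =
          c u.length * (prodC c u.length * ρ) := by ring
      rw [heq]
      exact h1.trans h2

theorem admWord_take {w : List ℕ} (hw : AdmWord n w) (m : ℕ) : AdmWord n (w.take m) := by
  intro j
  have hj0 : (j : ℕ) < min m w.length := List.length_take (i := m) (l := w) ▸ j.isLt
  have hj : (j : ℕ) < w.length := lt_of_lt_of_le hj0 (min_le_right _ _)
  have := hw ⟨j, hj⟩
  simpa [List.get_eq_getElem, List.getElem_take] using this

theorem Jw_take (hM : IsMoranSystem J n c Jw) {w : List ℕ} (hw : AdmWord n w) (m : ℕ) :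
    Jw w ⊆ Jw (w.take m) := by
  induction w using List.reverseRecOn with
  | nil => simp
  | append_singleton u i ih =>
    obtain ⟨hu, hi⟩ := admWord_append.mp hw
    rcases le_or_gt m u.length with hm | hm
    · rw [List.take_append_of_le_length hm]
      exact (hM.subset u hu i hi).trans (ih hu)
    · have : (u ++ [i]).length ≤ m := by
        simp only [List.length_append, List.length_singleton]; omega
      rw [List.take_of_length_le this]

theorem moran_disjoint (hM : IsMoranSystem J n c Jw) {k : ℕ} {w w' : List ℕ}
    (hw : w ∈ OmegaF n k) (hw' : w' ∈ OmegaF n k) (hne : w ≠ w') :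
    Disjoint (interior (Jw w)) (interior (Jw w')) := by
  induction k generalizing w w' with
  | zero =>
    obtain ⟨h1, -⟩ := mem_OmegaF.mp hw
    obtain ⟨h2, -⟩ := mem_OmegaF.mp hw'
    exact absurd (by rw [List.eq_nil_of_length_eq_zero h1,
      List.eq_nil_of_length_eq_zero h2]) hne
  | succ k ih =>
    simp only [OmegaF, Finset.mem_biUnion, Finset.mem_image, Finset.mem_range] at hw hw'
    obtain ⟨u, hu, i, hi, rfl⟩ := hw
    obtain ⟨u', hu', i', hi', rfl⟩ := hw'
    obtain ⟨hulen, huadm⟩ := mem_OmegaF.mp hu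
    obtain ⟨hulen', huadm'⟩ := mem_OmegaF.mp hu'
    rcases eq_or_ne u u' with rfl | hne'
    · have hii : i ≠ i' := by
        intro h; exact hne (by rw [h])
      exact hM.disj_int u huadm i (by rwa [hulen]) i' (by rwa [hulen]) hii
    · have h1 : interior (Jw (u ++ [i])) ⊆ interior (Jw u) :=
        interior_mono (hM.subset u huadm i (by rwa [hulen]))
      have h2 : interior (Jw (u' ++ [i'])) ⊆ interior (Jw u') :=
        interior_mono (hM.subset u' huadm' i' (by rwa [hulen']))
      exact (ih hu hu' hne').mono h1 h2

theorem moranSet_subset_level (k : ℕ) :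
    moranSet n Jw ⊆ ⋃ w ∈ OmegaF n k, Jw w := by
  intro x hx
  simp only [moranSet, Set.mem_iInter, Set.mem_iUnion] at hx
  obtain ⟨w, ⟨hlen, hadm⟩, hxw⟩ := hx k
  exact Set.mem_biUnion (mem_OmegaF.mpr ⟨hlen, hadm⟩) hxw

theorem moran_inter_nonempty (hM : IsMoranSystem J n c Jw) {z : EuclideanSpace ℝ (Fin d)}
    {ρ : ℝ} (hρ : 0 < ρ) (hz : ball z ρ ⊆ J) {k : ℕ} {w : List ℕ} (hw : w ∈ OmegaF n k) :
    (moranSet n Jw ∩ Jw w).Nonempty := by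
  obtain ⟨hlen, hadm⟩ := mem_OmegaF.mp hw
  -- extend w by zeros
  set W : ℕ → List ℕ := fun m => w ++ List.replicate m 0 with hW
  have hWlen : ∀ m, (W m).length = k + m := by
    intro m; simp [hW, hlen]
  have hWadm : ∀ m, AdmWord n (W m) := by
    intro m
    induction m with
    | zero => simpa [hW] using hadm
    | succ m ihm =>
      have : W (m + 1) = W m ++ [0] := by
        simp [hW, List.replicate_succ', List.append_assoc]
      rw [this]
      refine admWord_append.mpr ⟨ihm, ?_⟩
      exact lt_of_lt_of_le (by norm_num) (hM.two_le_n _)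
    
  have hWsub : ∀ m, Jw (W (m + 1)) ⊆ Jw (W m) := by
    intro m
    have heq : W (m + 1) = W m ++ [0] := by
      simp [hW, List.replicate_succ', List.append_assoc]
    rw [heq]
    exact hM.subset (W m) (hWadm m) 0 (lt_of_lt_of_le (by norm_num) (hM.two_le_n _))
  have hbasic : ∀ m, IsCompact (Jw (W m)) ∧ (Jw (W m)).Nonempty := by
    intro m
    obtain ⟨hc1, -, y, hy⟩ := moran_basic hM hz (W m) (hWadm m)
    exact ⟨hc1, ⟨y, hy (mem_ball_self (mul_pos (prodC_pos hM.c_pos _) hρ))⟩⟩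
  have hne : (⋂ m, Jw (W m)).Nonempty := by
    refine IsCompact.nonempty_iInter_of_sequence_nonempty_isCompact_isClosed
      (fun m => Jw (W m)) hWsub (fun m => (hbasic m).2) (hbasic 0).1
      (fun m => (hbasic m).1.isClosed)
  obtain ⟨x, hx⟩ := hne
  simp only [Set.mem_iInter] at hx
  have hx0 : x ∈ Jw w := by simpa [hW] using hx 0
  refine ⟨x, ?_, hx0⟩
  simp only [moranSet, Set.mem_iInter, Set.mem_iUnion]
  intro m
  rcases le_or_gt k m with hm | hm
  · refine ⟨W (m - k), ⟨by rw [hWlen]; omega, hWadm _⟩, hx _⟩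
  · refine ⟨w.take m, ⟨by simp [hlen]; omega, admWord_take hadm m⟩, ?_⟩
    exact Jw_take hM hadm m hx0

end Moran

end MoranAux

/-- If `liminf_k log(n₁⋯n_k)/(−log(c₁⋯c_k)) < limsup_k log(n₁⋯n_k)/(−log(c₁⋯c_k))`, then no
Moran set in the class `M(J,{n_k},{c_k})` is Ahlfors–David `s`-regular for any `s ∈ (0,∞)`. -/
theorem statement7 {d : ℕ} (n : ℕ → ℕ) (c : ℕ → ℝ)
    (hlt : Filter.liminf
        (fun k : ℕ => Real.log (prodN n k : ℝ) / (-Real.log (prodC c k))) Filter.atTop <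
      Filter.limsup
        (fun k : ℕ => Real.log (prodN n k : ℝ) / (-Real.log (prodC c k))) Filter.atTop) :
    ∀ (J : Set (EuclideanSpace ℝ (Fin d))) (Jw : List ℕ → Set (EuclideanSpace ℝ (Fin d))),
      IsMoranSystem J n c Jw → ∀ s : ℝ, 0 < s → ¬ IsADRegular (moranSet n Jw) s := by
  classical
  intro J Jw hM s hs hAD
  obtain ⟨hAcomp, hAdiam, μ, cst, hcst, hnull, hbnd⟩ := hAD
  set A := moranSet n Jw with hA
  -- dimension 0 is impossible
  rcases Nat.eq_zero_or_pos d with hd0 | hd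
  · subst hd0
    haveI : Subsingleton (EuclideanSpace ℝ (Fin 0)) := ⟨fun a b => by ext i; exact i.elim0⟩
    have h0 : Metric.diam A = 0 := Metric.diam_subsingleton (Set.subsingleton_of_subsingleton)
    rw [h0] at hAdiam
    exact lt_irrefl _ hAdiam
  -- basic geometry of J
  obtain ⟨z0, hz0⟩ := hM.int_nonempty
  obtain ⟨ρ, hρ, hzball⟩ := Metric.isOpen_iff.mp isOpen_interior z0 hz0
  have hzJ : Metric.ball z0 ρ ⊆ J := hzball.trans interior_subset
  set D : ℝ := Metric.diam J with hD
  have hDpos : 0 < D := by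
    haveI : Nonempty (Fin d) := ⟨⟨0, hd⟩⟩
    obtain ⟨v, hv⟩ := exists_ne (0 : EuclideanSpace ℝ (Fin d))
    have hvn : 0 < ‖v‖ := norm_pos_iff.mpr hv
    set u : EuclideanSpace ℝ (Fin d) := (ρ / (2 * ‖v‖)) • v with hu
    have hun : ‖u‖ = ρ / 2 := by
      rw [hu, norm_smul, Real.norm_eq_abs, abs_of_pos (by positivity)]
      field_simp
    have hmem : z0 + u ∈ J := hzJ (by
      simp only [Metric.mem_ball, dist_eq_norm, add_sub_cancel_left, hun]
      linarith)
    have hmem0 : z0 ∈ J := hzJ (Metric.mem_ball_self hρ)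
    have := Metric.dist_le_diam_of_mem hM.compact.isBounded hmem hmem0
    rw [dist_eq_norm, add_sub_cancel_left, hun] at this
    linarith
  have hρD : ρ ≤ 2 * D := by
    -- from the proof above: diam J ≥ ρ/2  (redo quickly)
    haveI : Nonempty (Fin d) := ⟨⟨0, hd⟩⟩
    obtain ⟨v, hv⟩ := exists_ne (0 : EuclideanSpace ℝ (Fin d))
    have hvn : 0 < ‖v‖ := norm_pos_iff.mpr hv
    set u : EuclideanSpace ℝ (Fin d) := (ρ / (2 * ‖v‖)) • v with hu
    have hun : ‖u‖ = ρ / 2 := by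
      rw [hu, norm_smul, Real.norm_eq_abs, abs_of_pos (by positivity)]
      field_simp
    have hmem : z0 + u ∈ J := hzJ (by
      simp only [Metric.mem_ball, dist_eq_norm, add_sub_cancel_left, hun]
      linarith)
    have hmem0 : z0 ∈ J := hzJ (Metric.mem_ball_self hρ)
    have := Metric.dist_le_diam_of_mem hM.compact.isBounded hmem hmem0
    rw [dist_eq_norm, add_sub_cancel_left, hun] at this
    linarith
  -- choice of points
  have hbasic := fun (w : List ℕ) (hw : AdmWord n w) => moran_basic hM hzJ w hw
  choose! yw hyw using fun (w : List ℕ) (hw : AdmWord n w) => (hbasic w hw).2.2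
  have hxw : ∀ (k : ℕ) (w : List ℕ), w ∈ OmegaF n k → (A ∩ Jw w).Nonempty :=
    fun k w hw => moran_inter_nonempty hM hρ hzJ hw
  choose! xw hxwA hxwJ using fun (k : ℕ) (w : List ℕ) (hw : w ∈ OmegaF n k) => hxw k w hw
  set P : ℕ → ℝ := prodC c with hP
  have hPpos : ∀ k, 0 < P k := prodC_pos hM.c_pos
  have hNk : ∀ k, 1 ≤ prodN n k := one_le_prodN hM.two_le_n
  have hJwJ : ∀ (w : List ℕ), AdmWord n w → Jw w ⊆ J := by
    intro w hw
    have := Jw_take hM hw 0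
    simpa [hM.root] using this
  -- prodC tends to zero
  obtain ⟨R₀, hR₀⟩ := hM.compact.isBounded.subset_ball z0
  have hR₀pos : 0 < R₀ := by
    by_contra h
    exact absurd (hR₀ (hzJ (Metric.mem_ball_self hρ))) (by simp [Metric.ball_eq_empty.mpr (not_lt.mp h)])
  have hcount : ∀ k : ℕ, (2 : ℝ) ^ k * (P k * ρ) ^ d ≤ R₀ ^ d := by
    intro k
    have hball : ∀ w ∈ OmegaF n k, Metric.ball (yw w) (P k * ρ) ⊆ Metric.ball z0 R₀ := by
      intro w hw
      obtain ⟨hlen, hadm⟩ := mem_OmegaF.mp hw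
      have h1 : Metric.ball (yw w) (P k * ρ) ⊆ Jw w := by
        have := hyw w hadm
        rwa [hlen] at this
      exact (h1.trans (hJwJ w hadm)).trans hR₀
    have hdisj : (↑(OmegaF n k) : Set (List ℕ)).Pairwise fun w w' =>
        Disjoint (Metric.ball (yw w) (P k * ρ)) (Metric.ball (yw w') (P k * ρ)) := by
      intro w hw w' hw' hne
      have h1 : Metric.ball (yw w) (P k * ρ) ⊆ interior (Jw w) := by
        obtain ⟨hlen, hadm⟩ := mem_OmegaF.mp hw
        refine interior_maximal ?_ Metric.isOpen_ball
        have := hyw w hadm; rwa [hlen] at this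
      have h2 : Metric.ball (yw w') (P k * ρ) ⊆ interior (Jw w') := by
        obtain ⟨hlen, hadm⟩ := mem_OmegaF.mp hw'
        refine interior_maximal ?_ Metric.isOpen_ball
        have := hyw w' hadm
        rwa [hlen] at this
      exact (moran_disjoint hM hw hw' hne).mono h1 h2
    have := ball_count hd (OmegaF n k) yw (mul_pos (hPpos k) hρ) hR₀pos.le z0 hball hdisj
    rw [card_OmegaF] at this
    calc (2 : ℝ) ^ k * (P k * ρ) ^ d ≤ (prodN n k : ℝ) * (P k * ρ) ^ d := by
          have h2 : (2 : ℝ) ^ k ≤ (prodN n k : ℝ) := by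
            exact_mod_cast two_pow_le_prodN hM.two_le_n k
          exact mul_le_mul_of_nonneg_right h2 (pow_nonneg (mul_nonneg (hPpos k).le hρ.le) _)
      _ ≤ R₀ ^ d := this
  have hP0 : Filter.Tendsto P Filter.atTop (nhds 0) := by
    have hanti : Antitone P := prodC_antitone hM.c_pos hM.c_lt_one
    have hbdd : BddBelow (Set.range P) := ⟨0, fun x ⟨k, hk⟩ => hk ▸ (hPpos k).le⟩
    have hlim := tendsto_atTop_ciInf hanti hbdd
    set l : ℝ := ⨅ k, P k with hl
    have hl0 : 0 ≤ l := le_ciInf fun k => (hPpos k).le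
    have hsq : Filter.Tendsto (fun k => (P k) ^ d) Filter.atTop (nhds 0) := by
      refine squeeze_zero (g := fun k : ℕ => (R₀^d / ρ^d) * (1/2:ℝ)^k)
        (fun k => pow_nonneg (hPpos k).le d) (fun k => ?_) ?_
      · have hrhs : (R₀^d / ρ^d) * (1/2:ℝ)^k = R₀^d / (ρ^d * 2^k) := by
          rw [one_div_pow, mul_one_div, div_div]
        show P k ^ d ≤ (R₀^d / ρ^d) * (1/2:ℝ)^k
        rw [hrhs, le_div_iff₀ (mul_pos (pow_pos hρ d) (pow_pos two_pos k))]
        calc P k ^ d * (ρ^d * 2^k) = 2^k * (P k * ρ)^d := by rw [mul_pow]; ring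
          _ ≤ R₀^d := hcount k
      · have : Filter.Tendsto (fun k : ℕ => (R₀^d / ρ^d) * (1/2 : ℝ)^k) Filter.atTop (nhds ((R₀^d/ρ^d) * 0)) :=
          (tendsto_pow_atTop_nhds_zero_of_lt_one (by norm_num) (by norm_num)).const_mul _
        simpa using this
    have hld : l ^ d = 0 :=
      tendsto_nhds_unique (hlim.pow d) hsq
    have : l = 0 := pow_eq_zero_iff hd.ne' |>.mp hld
    rwa [this] at hlim
  -- basic measure bounds
  have hcst0 : (0:ℝ) < cst := lt_of_lt_of_le one_pos hcst
  obtain ⟨x₀, hx₀A, -⟩ := moran_inter_nonempty hM hρ hzJ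
    (show ([] : List ℕ) ∈ OmegaF n 0 by simp [OmegaF])
  set dA : ℝ := Metric.diam A with hdA
  have hdA0 : (0:ℝ) ≤ dA := Metric.diam_nonneg
  have hAsub : A ⊆ Metric.closedBall x₀ dA := fun x hx =>
    Metric.mem_closedBall.mpr (Metric.dist_le_diam_of_mem hAcomp.isBounded hx hx₀A)
  have hunivA : μ Set.univ ≤ μ A := by
    have h := measure_union_le (μ := μ) A Aᶜ
    rw [Set.union_compl_self, hnull, add_zero] at h
    exact h
  have hμA : μ Set.univ ≤ ENNReal.ofReal (cst * dA ^ s) :=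
    le_trans (hunivA.trans (measure_mono hAsub)) ((hbnd x₀ hx₀A dA hAdiam le_rfl).2)
  have hμlow : ENNReal.ofReal (cst⁻¹ * dA ^ s) ≤ μ Set.univ :=
    le_trans (hbnd x₀ hx₀A dA hAdiam le_rfl).1 (measure_mono (Set.subset_univ _))
  set KM : ℝ := (2 * D / ρ + 1) ^ d with hKM
  have hKMpos : 0 < KM := pow_pos (by positivity) d
  -- bounded overlap
  have hoverlap : ∀ (k : ℕ) (p : EuclideanSpace ℝ (Fin d)) (G : Finset (List ℕ)),
      G ⊆ OmegaF n k → (∀ w ∈ G, p ∈ Metric.closedBall (xw k w) (P k * D)) →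
      (G.card : ℝ) ≤ KM := by
    intro k p G hG hp
    have hsub : ∀ w ∈ G, Metric.ball (yw w) (P k * ρ) ⊆
        Metric.ball p ((2 * D / ρ + 1) * (P k * ρ)) := by
      intro w hwG
      have hw := hG hwG
      obtain ⟨hlen, hadm⟩ := mem_OmegaF.mp hw
      have hywJ : yw w ∈ Jw w := by
        have h := hyw w hadm
        rw [hlen] at h
        exact h (Metric.mem_ball_self (mul_pos (hPpos k) hρ))
      have hdw : Metric.diam (Jw w) = P k * D := by
        have h := (hbasic w hadm).2.1
        rwa [hlen] at h
      have hdist1 : dist (yw w) (xw k w) ≤ P k * D := by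
        rw [← hdw]
        exact Metric.dist_le_diam_of_mem (hbasic w hadm).1.isBounded hywJ (hxwJ k w hw)
      have hdist2 : dist (xw k w) p ≤ P k * D := by
        have h := Metric.mem_closedBall.mp (hp w hwG)
        rwa [dist_comm] at h
      intro q hq
      have hq' : dist q (yw w) < P k * ρ := Metric.mem_ball.mp hq
      refine Metric.mem_ball.mpr ?_
      have key : (2 * D / ρ + 1) * (P k * ρ) = 2 * (P k * D) + P k * ρ := by
        field_simp
      rw [key]
      calc dist q p ≤ dist q (xw k w) + dist (xw k w) p := dist_triangle _ _ _
        _ ≤ (dist q (yw w) + dist (yw w) (xw k w)) + dist (xw k w) p := by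
            linarith [dist_triangle q (yw w) (xw k w)]
        _ < P k * ρ + (P k * D) + (P k * D) := by linarith
        _ = 2 * (P k * D) + P k * ρ := by ring
    have hdisj : (↑G : Set (List ℕ)).Pairwise fun w w' =>
        Disjoint (Metric.ball (yw w) (P k * ρ)) (Metric.ball (yw w') (P k * ρ)) := by
      intro w hw w' hw' hne
      have hw1 := hG hw
      have hw2 := hG hw'
      have h1 : Metric.ball (yw w) (P k * ρ) ⊆ interior (Jw w) := by
        obtain ⟨hlen, hadm⟩ := mem_OmegaF.mp hw1
        refine interior_maximal ?_ Metric.isOpen_ball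
        have h := hyw w hadm
        rwa [hlen] at h
      have h2 : Metric.ball (yw w') (P k * ρ) ⊆ interior (Jw w') := by
        obtain ⟨hlen, hadm⟩ := mem_OmegaF.mp hw2
        refine interior_maximal ?_ Metric.isOpen_ball
        have h := hyw w' hadm
        rwa [hlen] at h
      exact (moran_disjoint hM hw1 hw2 hne).mono h1 h2
    have hb := ball_count hd G yw (mul_pos (hPpos k) hρ)
      (mul_nonneg (by positivity) (mul_pos (hPpos k) hρ).le) p hsub hdisj
    have hppow : (0:ℝ) < (P k * ρ) ^ d := pow_pos (mul_pos (hPpos k) hρ) d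
    have hb' : (G.card : ℝ) * (P k * ρ)^d ≤ (2*D/ρ+1)^d * (P k * ρ)^d := by
      calc (G.card : ℝ) * (P k * ρ)^d ≤ ((2*D/ρ+1) * (P k * ρ))^d := hb
        _ = (2*D/ρ+1)^d * (P k * ρ)^d := mul_pow _ _ _
    have hfin := (mul_le_mul_iff_left₀ hppow).mp hb'
    rwa [hKM]
  -- the two key inequalities
  have hmain : ∀ k : ℕ, P k * D ≤ dA →
      cst⁻¹ * dA ^ s ≤ (prodN n k : ℝ) * (cst * (P k * D) ^ s) ∧
      (prodN n k : ℝ) * (cst⁻¹ * (P k * D) ^ s) ≤ KM * (cst * dA ^ s) := by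
    intro k hkle
    have hDk : 0 < P k * D := mul_pos (hPpos k) hDpos
    have hDks : (0:ℝ) ≤ (P k * D) ^ s := Real.rpow_nonneg hDk.le s
    have hcover : A ⊆ ⋃ w ∈ OmegaF n k, Metric.closedBall (xw k w) (P k * D) := by
      intro x hx
      obtain ⟨w, hw, hxw'⟩ := Set.mem_iUnion₂.mp (moranSet_subset_level k hx)
      refine Set.mem_biUnion hw ?_
      obtain ⟨hlen, hadm⟩ := mem_OmegaF.mp hw
      have hdw : Metric.diam (Jw w) = P k * D := by
        have h := (hbasic w hadm).2.1
        rwa [hlen] at h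
      exact Metric.mem_closedBall.mpr (hdw ▸
        Metric.dist_le_diam_of_mem (hbasic w hadm).1.isBounded hxw' (hxwJ k w hw))
    constructor
    · have h2 : μ Set.univ ≤ ∑ w ∈ OmegaF n k, μ (Metric.closedBall (xw k w) (P k * D)) :=
        le_trans hunivA (le_trans (measure_mono hcover) (measure_biUnion_finset_le _ _))
      have h3 : ∑ w ∈ OmegaF n k, μ (Metric.closedBall (xw k w) (P k * D)) ≤
          ∑ _w ∈ OmegaF n k, ENNReal.ofReal (cst * (P k * D) ^ s) :=
        Finset.sum_le_sum fun w hw => (hbnd (xw k w) (hxwA k w hw) _ hDk hkle).2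
      rw [Finset.sum_const, card_OmegaF, nsmul_eq_mul] at h3
      have h4 : ENNReal.ofReal (cst⁻¹ * dA ^ s) ≤
          (prodN n k : ℝ≥0∞) * ENNReal.ofReal (cst * (P k * D) ^ s) :=
        le_trans hμlow (le_trans h2 h3)
      have h5 : ((prodN n k : ℕ) : ℝ≥0∞) * ENNReal.ofReal (cst * (P k * D) ^ s) =
          ENNReal.ofReal ((prodN n k : ℝ) * (cst * (P k * D) ^ s)) := by
        rw [ENNReal.ofReal_mul (Nat.cast_nonneg _), ENNReal.ofReal_natCast]
      rw [h5] at h4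
      exact (ENNReal.ofReal_le_ofReal_iff
        (mul_nonneg (Nat.cast_nonneg _) (mul_nonneg hcst0.le hDks))).mp h4
    · have h1 : ∑ _w ∈ OmegaF n k, ENNReal.ofReal (cst⁻¹ * (P k * D) ^ s) ≤
          ∑ w ∈ OmegaF n k, μ (Metric.closedBall (xw k w) (P k * D)) :=
        Finset.sum_le_sum fun w hw => (hbnd (xw k w) (hxwA k w hw) _ hDk hkle).1
      have h2 : ∑ w ∈ OmegaF n k, μ (Metric.closedBall (xw k w) (P k * D)) ≤
          ENNReal.ofReal KM * μ Set.univ := by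
        refine sum_measure_le_overlap μ _ _ (fun w _ => measurableSet_closedBall) _ ?_
        intro p G hG hpG
        calc (G.card : ℝ≥0∞) = ENNReal.ofReal (G.card : ℝ) := by
              rw [ENNReal.ofReal_natCast]
          _ ≤ ENNReal.ofReal KM := ENNReal.ofReal_le_ofReal (hoverlap k p G hG hpG)
      have h3 : ENNReal.ofReal KM * μ Set.univ ≤
          ENNReal.ofReal KM * ENNReal.ofReal (cst * dA ^ s) := by gcongr
      rw [Finset.sum_const, card_OmegaF, nsmul_eq_mul] at h1
      have h4 : ENNReal.ofReal ((prodN n k : ℝ) * (cst⁻¹ * (P k * D) ^ s)) ≤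
          ENNReal.ofReal (KM * (cst * dA ^ s)) := by
        rw [ENNReal.ofReal_mul (Nat.cast_nonneg _), ENNReal.ofReal_natCast,
          ENNReal.ofReal_mul hKMpos.le]
        exact le_trans h1 (le_trans h2 h3)
      exact (ENNReal.ofReal_le_ofReal_iff
        (mul_nonneg hKMpos.le (mul_nonneg hcst0.le (Real.rpow_nonneg hdA0 s)))).mp h4
  -- pass to logarithms and limits
  have hLtop : Tendsto (fun k => -Real.log (P k)) atTop atTop := by
    have h1 : Tendsto P atTop (nhdsWithin 0 (Set.Ioi 0)) :=
      tendsto_nhdsWithin_of_tendsto_nhds_of_eventually_within _ hP0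
        (Filter.Eventually.of_forall fun k => hPpos k)
    have h2 : Tendsto (fun k => Real.log (P k)) atTop atBot :=
      Real.tendsto_log_nhdsGT_zero.comp h1
    exact tendsto_neg_atBot_atTop.comp h2
  have hDk0 : Tendsto (fun k => P k * D) atTop (nhds 0) := by
    simpa using hP0.mul_const D
  have hev1 : ∀ᶠ k in atTop, P k * D ≤ dA :=
    (hDk0.eventually_lt_const hAdiam).mono fun k h => h.le
  have hev2 : ∀ᶠ k in atTop, 1 ≤ -Real.log (P k) := hLtop.eventually_ge_atTop 1
  set b1 : ℝ := Real.log (cst⁻¹ * dA ^ s) - Real.log cst - s * Real.log D with hb1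
  set b2 : ℝ := Real.log (KM * (cst * dA ^ s)) + Real.log cst - s * Real.log D with hb2
  set C : ℝ := max |b1| |b2| with hC
  have hbound : ∀ᶠ k in atTop,
      |Real.log (prodN n k : ℝ) / (-Real.log (P k)) - s| ≤ C / (-Real.log (P k)) := by
    filter_upwards [hev1, hev2] with k hk1 hk2
    have hLpos : (0:ℝ) < -Real.log (P k) := lt_of_lt_of_le one_pos hk2
    have hDk : 0 < P k * D := mul_pos (hPpos k) hDpos
    obtain ⟨hA1, hA2⟩ := hmain k hk1
    have hNpos : (0:ℝ) < (prodN n k : ℝ) := by exact_mod_cast hNk k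
    have hdAs : (0:ℝ) < dA ^ s := Real.rpow_pos_of_pos hAdiam s
    have hDks : (0:ℝ) < (P k * D) ^ s := Real.rpow_pos_of_pos hDk s
    have hlogDk : Real.log (P k * D) = Real.log (P k) + Real.log D :=
      Real.log_mul (hPpos k).ne' hDpos.ne'
    have hlow : b1 + s * (-Real.log (P k)) ≤ Real.log (prodN n k : ℝ) := by
      have h := Real.log_le_log (mul_pos (inv_pos.mpr hcst0) hdAs) hA1
      rw [Real.log_mul hNpos.ne' (mul_pos hcst0 hDks).ne',
        Real.log_mul hcst0.ne' hDks.ne', Real.log_rpow hDk, hlogDk] at h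
      rw [hb1]
      linarith
    have hhigh : Real.log (prodN n k : ℝ) ≤ b2 + s * (-Real.log (P k)) := by
      have h := Real.log_le_log (mul_pos hNpos (mul_pos (inv_pos.mpr hcst0) hDks)) hA2
      rw [Real.log_mul hNpos.ne' (mul_pos (inv_pos.mpr hcst0) hDks).ne',
        Real.log_mul (inv_pos.mpr hcst0).ne' hDks.ne', Real.log_rpow hDk, hlogDk,
        Real.log_inv] at h
      rw [hb2]
      linarith
    have habs : |Real.log (prodN n k : ℝ) - s * (-Real.log (P k))| ≤ C := by
      rw [abs_le]
      constructor
      · have := neg_abs_le b1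
        have := le_max_left |b1| |b2|
        linarith
      · have := le_abs_self b2
        have := le_max_right |b1| |b2|
        linarith
    have heq : (Real.log (prodN n k : ℝ) - s * (-Real.log (P k))) / (-Real.log (P k)) =
        Real.log (prodN n k : ℝ) / (-Real.log (P k)) - s := by
      rw [sub_div, mul_div_assoc, div_self hLpos.ne', mul_one]
    rw [← heq, abs_div, abs_of_pos hLpos]
    exact (div_le_div_iff_of_pos_right hLpos).mpr habs
  have hCL : Tendsto (fun k => C / (-Real.log (P k))) atTop (nhds 0) :=
    tendsto_const_nhds.div_atTop hLtop
  have h1 : Tendsto (fun k => Real.log (prodN n k : ℝ) / (-Real.log (P k)) - s)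
      atTop (nhds 0) := by
    refine squeeze_zero_norm' ?_ hCL
    simpa [Real.norm_eq_abs] using hbound
  have htend : Tendsto (fun k => Real.log (prodN n k : ℝ) / (-Real.log (P k)))
      atTop (nhds s) := by
    have h2 := h1.add_const s
    simpa using h2
  rw [htend.liminf_eq, htend.limsup_eq] at hlt
  exact lt_irrefl s hlt

end
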